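/- Let U be an n×n real symmetric matrix with eigenvalues λ₁(U) ≥ … ≥ λₙ(U). For 1 ≤ l ≤ n set R_l = Σ_{j ≠ l} |U(j,l)|. Suppose for some index m: U(m,m) + R_m < U(l,l) − R_l for all 1 ≤ l ≤ m−1, and U(m,m) − R_m > U(l,l) + R_l for all m+1 ≤ l ≤ n. Then the set of eigenvalues of U lying outside the union ⋃_{l ≠ m} [U(l,l) − R_l, U(l,l) + R_l] is exactly the singleton {λ_m(U)}. -/

import Mathlib

open Set Polynomial Matrix

-- Quadratic form upper bound via row sums
lemma stmt3_quad {n : ℕ} (U : Matrix (Fin n) (Fin n) ℝ) (hU : U.IsSymm) (x : Fin n → ℝ) :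
    x ⬝ᵥ U.mulVec x ≤ ∑ k, (U k k + ∑ j ∈ Finset.univ.erase k, |U k j|) * x k ^ 2 := by
  have hexp : x ⬝ᵥ U.mulVec x
      = ∑ k, (U k k * x k ^ 2 + ∑ j ∈ Finset.univ.erase k, U k j * x k * x j) := by
    simp only [dotProduct, Matrix.mulVec, Finset.mul_sum]
    refine Finset.sum_congr rfl fun k _ => ?_
    rw [← Finset.add_sum_erase _ _ (Finset.mem_univ k)]
    congr 1
    · ring
    · exact Finset.sum_congr rfl fun j _ => by ring
  rw [hexp]
  have key : ∑ k, ∑ j ∈ Finset.univ.erase k, U k j * x k * x j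
      ≤ ∑ k, (∑ j ∈ Finset.univ.erase k, |U k j|) * x k ^ 2 := by
    have hAB : ∑ k, ∑ j ∈ Finset.univ.erase k, |U k j| * x j ^ 2
        = ∑ k, ∑ j ∈ Finset.univ.erase k, |U k j| * x k ^ 2 := by
      rw [Finset.sum_comm' (s' := fun k => Finset.univ.erase k) (t' := Finset.univ)
        (by intro a b; simp [Finset.mem_erase, eq_comm, and_comm])]
      refine Finset.sum_congr rfl fun k _ => Finset.sum_congr rfl fun j hj => ?_
      rw [hU.apply]
    calc ∑ k, ∑ j ∈ Finset.univ.erase k, U k j * x k * x j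
        ≤ ∑ k, ∑ j ∈ Finset.univ.erase k, |U k j| * (x k ^ 2 + x j ^ 2) / 2 := by
          refine Finset.sum_le_sum fun k _ => Finset.sum_le_sum fun j _ => ?_
          have h1 : U k j * x k * x j ≤ |U k j| * |x k * x j| := by
            calc U k j * x k * x j = U k j * (x k * x j) := by ring
            _ ≤ |U k j * (x k * x j)| := le_abs_self _
            _ = |U k j| * |x k * x j| := abs_mul _ _
          have h2 : |x k * x j| ≤ (x k ^ 2 + x j ^ 2) / 2 := by
            rw [abs_mul]
            nlinarith [sq_nonneg (|x k| - |x j|), sq_abs (x k), sq_abs (x j), abs_nonneg (x k), abs_nonneg (x j)]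
          calc U k j * x k * x j ≤ |U k j| * |x k * x j| := h1
          _ ≤ |U k j| * ((x k ^ 2 + x j ^ 2) / 2) :=
              mul_le_mul_of_nonneg_left h2 (abs_nonneg _)
          _ = |U k j| * (x k ^ 2 + x j ^ 2) / 2 := by ring
      _ = (∑ k, ∑ j ∈ Finset.univ.erase k, |U k j| * x k ^ 2) / 2
          + (∑ k, ∑ j ∈ Finset.univ.erase k, |U k j| * x j ^ 2) / 2 := by
          rw [← add_div, ← Finset.sum_add_distrib, Finset.sum_div]
          refine Finset.sum_congr rfl fun k _ => ?_
          rw [← Finset.sum_add_distrib, Finset.sum_div]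
          exact Finset.sum_congr rfl fun j _ => by ring
      _ = ∑ k, ∑ j ∈ Finset.univ.erase k, |U k j| * x k ^ 2 := by
          rw [hAB]; ring
      _ = ∑ k, (∑ j ∈ Finset.univ.erase k, |U k j|) * x k ^ 2 := by
          exact Finset.sum_congr rfl fun k _ => (Finset.sum_mul _ _ _).symm
  calc ∑ k, (U k k * x k ^ 2 + ∑ j ∈ Finset.univ.erase k, U k j * x k * x j)
      = (∑ k, U k k * x k ^ 2) + ∑ k, ∑ j ∈ Finset.univ.erase k, U k j * x k * x j := by
        rw [Finset.sum_add_distrib]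
    _ ≤ (∑ k, U k k * x k ^ 2) + ∑ k, (∑ j ∈ Finset.univ.erase k, |U k j|) * x k ^ 2 := by
        linarith
    _ = ∑ k, (U k k + ∑ j ∈ Finset.univ.erase k, |U k j|) * x k ^ 2 := by
        rw [← Finset.sum_add_distrib]
        exact Finset.sum_congr rfl fun k _ => by ring

lemma stmt3_dpsuml {n : ℕ} {ι : Type*} (s : Finset ι) (f : ι → (Fin n → ℝ)) (y : Fin n → ℝ) :
    (∑ i ∈ s, f i) ⬝ᵥ y = ∑ i ∈ s, (f i ⬝ᵥ y) := by
  simp only [dotProduct, Finset.sum_apply, Finset.sum_mul]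
  rw [Finset.sum_comm]

lemma stmt3_dpsumr {n : ℕ} {ι : Type*} (s : Finset ι) (f : ι → (Fin n → ℝ)) (y : Fin n → ℝ) :
    y ⬝ᵥ (∑ i ∈ s, f i) = ∑ i ∈ s, (y ⬝ᵥ f i) := by
  simp only [dotProduct, Finset.sum_apply, Finset.mul_sum]
  rw [Finset.sum_comm]

-- eigen side inequality
lemma stmt3_keyineq {n : ℕ} (U : Matrix (Fin n) (Fin n) ℝ)
    (w : Fin n → (Fin n → ℝ)) (hw : ∀ i j, w i ⬝ᵥ w j = if i = j then 1 else 0)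
    (eig : Fin n → ℝ) (heig : ∀ i, U.mulVec (w i) = eig i • w i)
    (v : ℝ) (S : Finset (Fin n)) (hS : ∀ i ∈ S, v ≤ eig i)
    (c : Fin n → ℝ) (hc : ∀ i ∉ S, c i = 0) (x : Fin n → ℝ) (hx : x = ∑ i, c i • w i) :
    v * (x ⬝ᵥ x) ≤ x ⬝ᵥ U.mulVec x := by
  have hxw : ∀ j, x ⬝ᵥ w j = c j := by
    intro j
    rw [hx, stmt3_dpsuml]
    have he : ∀ i, (c i • w i) ⬝ᵥ w j = c i * (if i = j then 1 else 0) := by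
      intro i; rw [smul_dotProduct, hw i j, smul_eq_mul]
    simp only [he, mul_ite, mul_one, mul_zero]
    simp
  have hmv : U.mulVec x = ∑ i, (c i * eig i) • w i := by
    rw [hx]
    have h0 : U.mulVec (∑ i, c i • w i) = U.mulVecLin (∑ i, c i • w i) := rfl
    rw [h0, map_sum]
    refine Finset.sum_congr rfl fun i _ => ?_
    rw [_root_.map_smul, Matrix.mulVecLin_apply, heig i, smul_smul]
  have hq : x ⬝ᵥ U.mulVec x = ∑ i, eig i * c i ^ 2 := by
    rw [hmv, stmt3_dpsumr]
    refine Finset.sum_congr rfl fun i _ => ?_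
    rw [dotProduct_smul, hxw i, smul_eq_mul]
    ring
  have hxx : x ⬝ᵥ x = ∑ i, c i ^ 2 := by
    nth_rewrite 2 [hx]
    rw [stmt3_dpsumr]
    refine Finset.sum_congr rfl fun i _ => ?_
    rw [dotProduct_smul, hxw i, smul_eq_mul]
    ring
  rw [hq, hxx, Finset.mul_sum]
  refine Finset.sum_le_sum fun i _ => ?_
  by_cases hi : i ∈ S
  · exact mul_le_mul_of_nonneg_right (hS i hi) (sq_nonneg _)
  · rw [hc i hi]; simp

lemma stmt3_finrank_span {n : ℕ} (b : OrthonormalBasis (Fin n) ℝ (EuclideanSpace ℝ (Fin n)))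
    (S : Finset (Fin n)) :
    Module.finrank ℝ (Submodule.span ℝ (Set.range fun i : {i // i ∈ S} => b i.val)) = S.card := by
  have li : LinearIndependent ℝ (fun i : {i // i ∈ S} => b i.val) :=
    b.orthonormal.linearIndependent.comp _ Subtype.val_injective
  rw [finrank_span_eq_card li, Fintype.card_coe]

lemma stmt3_repr_zero {n : ℕ} (b : OrthonormalBasis (Fin n) ℝ (EuclideanSpace ℝ (Fin n)))
    (S : Finset (Fin n)) (x : EuclideanSpace ℝ (Fin n))
    (hx : x ∈ Submodule.span ℝ (Set.range fun i : {i // i ∈ S} => b i.val))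
    (i : Fin n) (hi : i ∉ S) : b.repr x i = 0 := by
  induction hx using Submodule.span_induction with
  | mem y hy =>
    obtain ⟨⟨j, hj⟩, rfl⟩ := hy
    rw [OrthonormalBasis.repr_self]
    rw [EuclideanSpace.single_apply]
    have : i ≠ j := fun h => hi (h ▸ hj)
    simp [this]
  | zero => simp
  | add y z hy hz ih1 ih2 => rw [map_add]; simp [ih1, ih2]
  | smul a y hy ih => rw [_root_.map_smul]; simp [ih]

lemma stmt3_aux_card {n : ℕ} (U : Matrix (Fin n) (Fin n) ℝ) (hU : U.IsSymm)
    (b : OrthonormalBasis (Fin n) ℝ (EuclideanSpace ℝ (Fin n))) (eig : Fin n → ℝ)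
    (heig : ∀ i, U.mulVec ((WithLp.equiv 2 (Fin n → ℝ)) (b i))
      = eig i • (WithLp.equiv 2 (Fin n → ℝ)) (b i))
    (v : ℝ) (S W : Finset (Fin n))
    (hS : ∀ i ∈ S, v ≤ eig i)
    (hW : ∀ k ∈ W, U k k + ∑ j ∈ Finset.univ.erase k, |U k j| < v) :
    S.card + W.card ≤ n := by
  by_contra hcon
  push_neg at hcon
  set b0 : OrthonormalBasis (Fin n) ℝ (EuclideanSpace ℝ (Fin n)) :=
    EuclideanSpace.basisFun (Fin n) ℝ with hb0
  have hrp := stmt3_finrank_span b S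
  have hrq := stmt3_finrank_span b0 W
  set P := Submodule.span ℝ (Set.range fun i : {i // i ∈ S} => b i.val) with hP
  set Q := Submodule.span ℝ (Set.range fun k : {k // k ∈ W} => b0 k.val) with hQ
  have hsup : Module.finrank ℝ ↥(P ⊔ Q) ≤ n := by
    have h := Submodule.finrank_le (P ⊔ Q)
    rwa [finrank_euclideanSpace, Fintype.card_fin] at h
  have heq := Submodule.finrank_sup_add_finrank_inf_eq P Q
  have hpos : 0 < Module.finrank ℝ ↥(P ⊓ Q) := by omega
  obtain ⟨⟨x, hxPQ⟩, hx0⟩ := Module.finrank_pos_iff_exists_ne_zero.mp hpos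
  obtain ⟨hxP, hxQ⟩ := Submodule.mem_inf.mp hxPQ
  have hx0' : x ≠ 0 := fun h => hx0 (Subtype.ext h)
  set c : Fin n → ℝ := fun i => b.repr x i with hcdef
  have hc : ∀ i ∉ S, c i = 0 := fun i hi => stmt3_repr_zero b S x hxP i hi
  set x' : Fin n → ℝ := (WithLp.equiv 2 (Fin n → ℝ)) x with hx'def
  have hxsum : x' = ∑ i, c i • (WithLp.equiv 2 (Fin n → ℝ)) (b i) := by
    have h1 : (∑ i, c i • b i) = x := b.sum_repr x
    calc x' = (WithLp.linearEquiv 2 ℝ (Fin n → ℝ)) x := rfl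
    _ = (WithLp.linearEquiv 2 ℝ (Fin n → ℝ)) (∑ i, c i • b i) := by rw [h1]
    _ = ∑ i, c i • (WithLp.linearEquiv 2 ℝ (Fin n → ℝ)) (b i) := by
        rw [map_sum]
        exact Finset.sum_congr rfl fun i _ => by rw [_root_.map_smul]
    _ = ∑ i, c i • (WithLp.equiv 2 (Fin n → ℝ)) (b i) := rfl
  have hw : ∀ i j, ((WithLp.equiv 2 (Fin n → ℝ)) (b i)) ⬝ᵥ ((WithLp.equiv 2 (Fin n → ℝ)) (b j))
      = if i = j then (1:ℝ) else 0 := by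
    intro i j
    have h := orthonormal_iff_ite.mp b.orthonormal i j
    rw [PiLp.inner_apply] at h
    simpa [RCLike.inner_apply, dotProduct, mul_comm] using h
  have hlow : v * (x' ⬝ᵥ x') ≤ x' ⬝ᵥ U.mulVec x' :=
    stmt3_keyineq U _ hw eig heig v S hS c hc x' hxsum
  have hsupp : ∀ l ∉ W, x' l = 0 := by
    intro l hl
    have h := stmt3_repr_zero b0 W x hxQ l hl
    rwa [hb0, EuclideanSpace.basisFun_repr] at h
  have hxk : ∃ k, x' k ≠ 0 := by
    by_contra hall; push_neg at hall
    exact hx0' (PiLp.ext hall)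
  obtain ⟨k0, hk0⟩ := hxk
  have hk0W : k0 ∈ W := by by_contra h; exact hk0 (hsupp k0 h)
  have hup : x' ⬝ᵥ U.mulVec x' < v * (x' ⬝ᵥ x') := by
    have h1 := stmt3_quad U hU x'
    have hk0sq : 0 < x' k0 ^ 2 := by
      rcases (sq_nonneg (x' k0)).lt_or_eq with h | h
      · exact h
      · exact absurd (pow_eq_zero_iff two_ne_zero |>.mp h.symm) hk0
    have h2 : ∑ k, (U k k + ∑ j ∈ Finset.univ.erase k, |U k j|) * x' k ^ 2
        < ∑ k, v * x' k ^ 2 := by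
      apply Finset.sum_lt_sum
      · intro k _
        by_cases hk : k ∈ W
        · exact mul_le_mul_of_nonneg_right (le_of_lt (hW k hk)) (sq_nonneg _)
        · rw [hsupp k hk]; simp
      · exact ⟨k0, Finset.mem_univ k0, mul_lt_mul_of_pos_right (hW k0 hk0W) hk0sq⟩
    have h3 : ∑ k, v * x' k ^ 2 = v * (x' ⬝ᵥ x') := by
      rw [← Finset.mul_sum]
      congr 1
      simp [dotProduct, sq]
    linarith
  linarith

lemma stmt3_eig_count {n : ℕ} (U : Matrix (Fin n) (Fin n) ℝ) (hU : U.IsSymm) (hA : U.IsHermitian)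
    (v : ℝ) (T : Finset (Fin n))
    (hup : ∀ k, k ∉ T → U k k + ∑ j ∈ Finset.univ.erase k, |U k j| < v)
    (hlo : ∀ k ∈ T, v < U k k - ∑ j ∈ Finset.univ.erase k, |U k j|) :
    (Finset.univ.filter fun i => v < hA.eigenvalues i).card = T.card := by
  set eig := hA.eigenvalues with heigdef
  have heig := hA.mulVec_eigenvectorBasis
  have hTn : T.card ≤ n := by
    have := Finset.card_le_univ T
    rwa [Fintype.card_fin] at this
  apply le_antisymm
  · have h := stmt3_aux_card U hU hA.eigenvectorBasis eig heig v
      (Finset.univ.filter fun i => v < eig i) Tᶜ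
      (fun i hi => le_of_lt (Finset.mem_filter.mp hi).2)
      (fun k hk => hup k (Finset.mem_compl.mp hk))
    have hc : Tᶜ.card = n - T.card := by
      rw [Finset.card_compl, Fintype.card_fin]
    omega
  · have hU' : (-U).IsSymm := by
      unfold Matrix.IsSymm at *
      rw [Matrix.transpose_neg, hU]
    have heig' : ∀ i, (-U).mulVec ((WithLp.equiv 2 (Fin n → ℝ)) (hA.eigenvectorBasis i))
        = (-eig i) • (WithLp.equiv 2 (Fin n → ℝ)) (hA.eigenvectorBasis i) := by
      intro i
      rw [Matrix.neg_mulVec, neg_smul]; exact congrArg Neg.neg (heig i)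
    have h := stmt3_aux_card (-U) hU' hA.eigenvectorBasis (fun i => -eig i) heig' (-v)
      (Finset.univ.filter fun i => ¬ v < eig i) T
      (fun i hi => by
        have h2 := (Finset.mem_filter.mp hi).2
        push_neg at h2
        simp only [neg_le_neg_iff]
        exact h2)
      (fun k hk => by
        have h2 := hlo k hk
        have h3 : ∑ j ∈ Finset.univ.erase k, |(-U) k j| = ∑ j ∈ Finset.univ.erase k, |U k j| :=
          Finset.sum_congr rfl fun j _ => by rw [Matrix.neg_apply, abs_neg]
        rw [h3, Matrix.neg_apply]
        linarith)
    have hsplit := Finset.card_filter_add_card_filter_not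
      (s := Finset.univ) (p := fun i => v < eig i)
    rw [Finset.card_univ, Fintype.card_fin] at hsplit
    omega

lemma stmt3_charpoly {n : ℕ} (U : Matrix (Fin n) (Fin n) ℝ) (hA : U.IsHermitian) :
    U.charpoly = ∏ i : Fin n, (X - C (hA.eigenvalues i)) := by
  set f := (Matrix.toEuclideanLin U : EuclideanSpace ℝ (Fin n) →ₗ[ℝ] EuclideanSpace ℝ (Fin n))
    with hf
  set b1 := (EuclideanSpace.basisFun (Fin n) ℝ).toBasis with hb1
  set b2 := (hA.eigenvectorBasis).toBasis with hb2
  have claim1 : LinearMap.toMatrix b1 b1 f = U := by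
    ext i j
    rw [LinearMap.toMatrix_apply, hb1, OrthonormalBasis.coe_toBasis_repr_apply,
      EuclideanSpace.basisFun_repr, OrthonormalBasis.coe_toBasis, EuclideanSpace.basisFun_apply,
      hf, Matrix.toEuclideanLin_apply]
    simp [PiLp.ofLp_single, Matrix.mulVec_single]
  have claim2 : LinearMap.toMatrix b2 b2 f = Matrix.diagonal hA.eigenvalues := by
    ext i j
    have hfb : f (hA.eigenvectorBasis j) = hA.eigenvalues j • hA.eigenvectorBasis j := by
      rw [hf, Matrix.toEuclideanLin_apply, hA.mulVec_eigenvectorBasis]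
      rfl
    rw [LinearMap.toMatrix_apply, hb2, OrthonormalBasis.coe_toBasis, hfb, _root_.map_smul]
    rcases eq_or_ne i j with rfl | hij
    · simp [Module.Basis.repr_self]
    · simp [Module.Basis.repr_self, Finsupp.single_apply, Ne.symm hij, Matrix.diagonal_apply_ne _ hij, hij]
  have hdiag : (Matrix.diagonal hA.eigenvalues).charpoly
      = ∏ i : Fin n, (X - C (hA.eigenvalues i)) := by
    rw [Matrix.charpoly]
    have hch : (Matrix.diagonal hA.eigenvalues).charmatrix
        = Matrix.diagonal (fun i => (X : ℝ[X]) - C (hA.eigenvalues i)) := by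
      ext i j
      rcases eq_or_ne i j with rfl | hij
      · rw [Matrix.charmatrix_apply_eq, Matrix.diagonal_apply_eq, Matrix.diagonal_apply_eq]
      · rw [Matrix.charmatrix_apply_ne _ _ _ hij, Matrix.diagonal_apply_ne _ hij,
          Matrix.diagonal_apply_ne _ hij, map_zero, neg_zero]
    rw [hch, Matrix.det_diagonal]
  calc U.charpoly = (LinearMap.toMatrix b1 b1 f).charpoly := by rw [claim1]
  _ = f.charpoly := LinearMap.charpoly_toMatrix f b1
  _ = (LinearMap.toMatrix b2 b2 f).charpoly := (LinearMap.charpoly_toMatrix f b2).symm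
  _ = _ := by rw [claim2, hdiag]

lemma stmt3_spec {n : ℕ} (U : Matrix (Fin n) (Fin n) ℝ) (x : ℝ) :
    x ∈ spectrum ℝ U ↔ U.charpoly.eval x = 0 := by
  rw [spectrum.mem_iff]
  have h1 : U.charpoly.eval x = (Matrix.scalar (Fin n) x - U).det := by
    rw [Matrix.charpoly, eval_det, Matrix.matPolyEquiv_charmatrix, Polynomial.eval_sub,
      Polynomial.eval_X, Polynomial.eval_C]
  have h2 : algebraMap ℝ (Matrix (Fin n) (Fin n) ℝ) x = Matrix.scalar (Fin n) x := by
    rw [Matrix.algebraMap_eq_diagonal]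
    rfl
  rw [h1, h2, Matrix.isUnit_iff_isUnit_det, isUnit_iff_ne_zero, not_not]

lemma stmt3_count_transfer {n : ℕ} (μ eig : Fin n → ℝ)
    (h : ∏ i : Fin n, (X - C (μ i)) = ∏ i : Fin n, (X - C (eig i))) (v : ℝ) :
    (Finset.univ.filter fun i => v < μ i).card
      = (Finset.univ.filter fun i => v < eig i).card := by
  have e : ∀ f : Fin n → ℝ, ∏ i : Fin n, (X - C (f i))
      = ((Finset.univ.val.map f).map (fun a => X - C a)).prod := by
    intro f; rw [Multiset.map_map]; rfl
  have key : (Finset.univ.val.map μ) = (Finset.univ.val.map eig) := by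
    have h2 := congrArg Polynomial.roots h
    rwa [e μ, e eig, Polynomial.roots_multiset_prod_X_sub_C,
      Polynomial.roots_multiset_prod_X_sub_C] at h2
  have c : ∀ f : Fin n → ℝ, (Finset.univ.filter fun i => v < f i).card
      = Multiset.countP (fun a => v < a) (Finset.univ.val.map f) := by
    intro f
    rw [Multiset.countP_map]
    rfl
  rw [c μ, c eig, key]

lemma stmt3_seg {n : ℕ} (μ : Fin n → ℝ) (hμ : Antitone μ) (v : ℝ) (k : ℕ)
    (h : (Finset.univ.filter fun i => v < μ i).card = k) (i : Fin n) :
    v < μ i ↔ i.val < k := by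
  constructor
  · intro hi
    have hsub : Finset.Iic i ⊆ Finset.univ.filter fun j => v < μ j := by
      intro j hj
      rw [Finset.mem_Iic] at hj
      exact Finset.mem_filter.mpr ⟨Finset.mem_univ j, lt_of_lt_of_le hi (hμ hj)⟩
    have := Finset.card_le_card hsub
    rw [Fin.card_Iic, h] at this
    omega
  · intro hik
    by_contra hvi
    push_neg at hvi
    have hsub : (Finset.univ.filter fun j => v < μ j) ⊆ Finset.Iio i := by
      intro j hj
      have hj2 := (Finset.mem_filter.mp hj).2
      rw [Finset.mem_Iio]
      by_contra hji
      push_neg at hji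
      exact absurd (lt_of_lt_of_le hj2 (hμ hji)) (not_lt.mpr hvi)
    have := Finset.card_le_card hsub
    rw [Fin.card_Iio, h] at this
    omega

lemma stmt3_gersh {n : ℕ} (U : Matrix (Fin n) (Fin n) ℝ) {x : ℝ} (hx : x ∈ spectrum ℝ U) :
    ∃ k, |x - U k k| ≤ ∑ j ∈ Finset.univ.erase k, |U k j| := by
  have hs : x ∈ spectrum ℝ (Matrix.toLin' U) := by
    have he : spectrum ℝ (Matrix.toLin' U) = spectrum ℝ U := by
      rw [← Matrix.toLin_eq_toLin']
      exact AlgEquiv.spectrum_eq (Matrix.toLinAlgEquiv (Pi.basisFun ℝ (Fin n))) U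
    rwa [he]
  have hev : Module.End.HasEigenvalue (Matrix.toLin' U) x :=
    Module.End.hasEigenvalue_iff_mem_spectrum.mpr hs
  obtain ⟨k, hk⟩ := eigenvalue_mem_ball hev
  refine ⟨k, ?_⟩
  rw [Metric.mem_closedBall, Real.dist_eq] at hk
  simpa [Real.norm_eq_abs] using hk

theorem stmt3 (n : ℕ) (U : Matrix (Fin n) (Fin n) ℝ) (hU : U.IsSymm)
    (μ : Fin n → ℝ) (hμ : Antitone μ)
    (hchar : U.charpoly = ∏ i : Fin n, (X - C (μ i)))
    (R : Fin n → ℝ) (hR : ∀ l, R l = ∑ j ∈ Finset.univ.erase l, |U j l|)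
    (m : Fin n)
    (h1 : ∀ l, l < m → U m m + R m < U l l - R l)
    (h2 : ∀ l, m < l → U l l + R l < U m m - R m) :
    spectrum ℝ U \ (⋃ l, ⋃ (_ : l ≠ m), Icc (U l l - R l) (U l l + R l)) = {μ m} := by
  classical
  have hA : U.IsHermitian := by
    rw [Matrix.IsHermitian, Matrix.conjTranspose_eq_transpose_of_trivial]
    exact hU
  set eig := hA.eigenvalues with heigdef
  have hRrow : ∀ k, R k = ∑ j ∈ Finset.univ.erase k, |U k j| := by
    intro k
    rw [hR]
    exact Finset.sum_congr rfl fun j _ => congrArg abs (hU.apply j k).symm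
  have hRnn : ∀ l, 0 ≤ R l := fun l => by
    rw [hR]; exact Finset.sum_nonneg fun j _ => abs_nonneg _
  have hchar2 := stmt3_charpoly U hA
  have hprod : ∏ i : Fin n, (X - C (μ i)) = ∏ i : Fin n, (X - C (eig i)) :=
    hchar.symm.trans hchar2
  have K1 : ∀ v : ℝ, U m m + R m < v → (∀ l, l < m → v < U l l - R l) →
      (Finset.univ.filter fun i => v < μ i).card = m.val := by
    intro v hv1 hv2
    rw [stmt3_count_transfer μ eig hprod v]
    have hc := stmt3_eig_count U hU hA v (Finset.Iio m) ?hup ?hlo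
    · rw [hc, Fin.card_Iio]
    case hup =>
      intro k hk
      rw [Finset.mem_Iio] at hk
      push_neg at hk
      rw [← hRrow]
      rcases eq_or_lt_of_le hk with h | hlt
      · rw [← h]; exact hv1
      · have ha := h2 k hlt
        have hb := hRnn m
        linarith
    case hlo =>
      intro k hk
      rw [Finset.mem_Iio] at hk
      rw [← hRrow]
      exact hv2 k hk
  have K2 : ∀ v : ℝ, (∀ l, m < l → U l l + R l < v) → v < U m m - R m →
      (Finset.univ.filter fun i => v < μ i).card = m.val + 1 := by
    intro v hv1 hv2
    rw [stmt3_count_transfer μ eig hprod v]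
    have hc := stmt3_eig_count U hU hA v (Finset.Iic m) ?hup ?hlo
    · rw [hc, Fin.card_Iic]
    case hup =>
      intro k hk
      rw [Finset.mem_Iic] at hk
      push_neg at hk
      rw [← hRrow]
      exact hv1 k hk
    case hlo =>
      intro k hk
      rw [Finset.mem_Iic] at hk
      rw [← hRrow]
      rcases eq_or_lt_of_le hk with h | hlt
      · rw [h]; exact hv2
      · have ha := h1 k hlt
        have hb := hRnn m
        linarith
  have hspec : ∀ x : ℝ, x ∈ spectrum ℝ U ↔ ∃ i, μ i = x := by
    intro x
    rw [stmt3_spec U x, hchar, Polynomial.eval_prod]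
    rw [Finset.prod_eq_zero_iff]
    constructor
    · rintro ⟨i, -, hi⟩
      rw [Polynomial.eval_sub, Polynomial.eval_X, Polynomial.eval_C, sub_eq_zero] at hi
      exact ⟨i, hi.symm⟩
    · rintro ⟨i, hi⟩
      exact ⟨i, Finset.mem_univ i,
        by rw [Polynomial.eval_sub, Polynomial.eval_X, Polynomial.eval_C, hi, sub_self]⟩
  ext x
  simp only [Set.mem_diff, Set.mem_iUnion, Set.mem_singleton_iff, not_exists, Set.mem_Icc]
  constructor
  · rintro ⟨hxs, hxn⟩
    obtain ⟨i, hi⟩ := (hspec x).mp hxs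
    obtain ⟨k, hk⟩ := stmt3_gersh U hxs
    rw [← hRrow] at hk
    have hkm : k = m := by
      by_contra hkm
      obtain ⟨hk1, hk2⟩ := abs_le.mp hk
      exact hxn k hkm ⟨by linarith, by linarith⟩
    rw [hkm] at hk
    obtain ⟨hk1, hk2⟩ := abs_le.mp hk
    have hxlb : U m m - R m ≤ x := by linarith
    have hxub : x ≤ U m m + R m := by linarith
    rcases lt_trichotomy i m with him | him | him
    · have hne : (Finset.Iio m).Nonempty := ⟨i, Finset.mem_Iio.mpr him⟩
      set G := ((Finset.Iio m).image fun l => U l l - R l).min' (hne.image _) with hG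
      obtain ⟨l0, hl0mem, hl0⟩ := Finset.mem_image.mp
        (((Finset.Iio m).image fun l => U l l - R l).min'_mem (hne.image fun l => U l l - R l))
      have hGgt : U m m + R m < G := by
        rw [← hG] at hl0
        rw [← hl0]
        exact h1 l0 (Finset.mem_Iio.mp hl0mem)
      set v := (U m m + R m + G)/2 with hv
      have hv1 : U m m + R m < v := by rw [hv]; linarith
      have hv2 : v < G := by rw [hv]; linarith
      have hvall : ∀ l, l < m → v < U l l - R l := by
        intro l hl
        have hle : G ≤ U l l - R l :=
          Finset.min'_le _ _ (Finset.mem_image_of_mem _ (Finset.mem_Iio.mpr hl))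
        linarith
      have hc := K1 v hv1 hvall
      have hlt := (stmt3_seg μ hμ v m.val hc i).mpr him
      rw [hi] at hlt
      linarith
    · rw [him] at hi
      exact hi.symm
    · have hne : (Finset.Ioi m).Nonempty := ⟨i, Finset.mem_Ioi.mpr him⟩
      set G := ((Finset.Ioi m).image fun l => U l l + R l).max' (hne.image _) with hG
      obtain ⟨l0, hl0mem, hl0⟩ := Finset.mem_image.mp
        (((Finset.Ioi m).image fun l => U l l + R l).max'_mem (hne.image fun l => U l l + R l))
      have hGlt : G < U m m - R m := by
        rw [← hG] at hl0
        rw [← hl0]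
        exact h2 l0 (Finset.mem_Ioi.mp hl0mem)
      set v := (G + (U m m - R m))/2 with hv
      have hv2 : v < U m m - R m := by rw [hv]; linarith
      have hvall : ∀ l, m < l → U l l + R l < v := by
        intro l hl
        have hle : U l l + R l ≤ G := by
          rw [hG]
          exact Finset.le_max' _ _ (Finset.mem_image_of_mem (fun l => U l l + R l) (Finset.mem_Ioi.mpr hl))
        rw [hv]; linarith
      have hc := K2 v hvall hv2
      have hnlt : ¬ (v < μ i) := by
        rw [stmt3_seg μ hμ v (m.val+1) hc i]
        have : m.val < i.val := him
        omega
      push_neg at hnlt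
      rw [hi] at hnlt
      have hGv : G < v := by rw [hv]; linarith
      linarith
  · intro hx
    refine ⟨by rw [hx]; exact (hspec _).mpr ⟨m, rfl⟩, ?_⟩
    intro l hlm hmem
    rcases lt_or_gt_of_ne hlm with hl | hl
    · -- l < m : show contradiction with x in Icc of disc l
      have hne : (Finset.Iio m).Nonempty := ⟨l, Finset.mem_Iio.mpr hl⟩
      set G := ((Finset.Iio m).image fun l => U l l - R l).min' (hne.image _) with hG
      obtain ⟨l0, hl0mem, hl0⟩ := Finset.mem_image.mp
        (((Finset.Iio m).image fun l => U l l - R l).min'_mem (hne.image fun l => U l l - R l))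
      have hGgt : U m m + R m < G := by
        rw [← hG] at hl0
        rw [← hl0]
        exact h1 l0 (Finset.mem_Iio.mp hl0mem)
      set v := (U m m + R m + G)/2 with hv
      have hv1 : U m m + R m < v := by rw [hv]; linarith
      have hv2 : v < G := by rw [hv]; linarith
      have hvall : ∀ l, l < m → v < U l l - R l := by
        intro l' hl'
        have hle : G ≤ U l' l' - R l' :=
          Finset.min'_le _ _ (Finset.mem_image_of_mem _ (Finset.mem_Iio.mpr hl'))
        linarith
      have hc := K1 v hv1 hvall
      have hnlt : ¬ (v < μ m) := by
        rw [stmt3_seg μ hμ v m.val hc m]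
        omega
      push_neg at hnlt
      have : v < U l l - R l := hvall l hl
      rw [hx] at hmem
      linarith [hmem.1]
    · have hne : (Finset.Ioi m).Nonempty := ⟨l, Finset.mem_Ioi.mpr hl⟩
      set G := ((Finset.Ioi m).image fun l => U l l + R l).max' (hne.image _) with hG
      obtain ⟨l0, hl0mem, hl0⟩ := Finset.mem_image.mp
        (((Finset.Ioi m).image fun l => U l l + R l).max'_mem (hne.image fun l => U l l + R l))
      have hGlt : G < U m m - R m := by
        rw [← hG] at hl0
        rw [← hl0]
        exact h2 l0 (Finset.mem_Ioi.mp hl0mem)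
      set v := (G + (U m m - R m))/2 with hv
      have hv2 : v < U m m - R m := by rw [hv]; linarith
      have hvall : ∀ l, m < l → U l l + R l < v := by
        intro l' hl'
        have hle : U l' l' + R l' ≤ G := by
          rw [hG]
          exact Finset.le_max' _ _ (Finset.mem_image_of_mem (fun l => U l l + R l) (Finset.mem_Ioi.mpr hl'))
        rw [hv]; linarith
      have hc := K2 v hvall hv2
      have hlt : v < μ m := by
        rw [stmt3_seg μ hμ v (m.val+1) hc m]
        omega
      have : U l l + R l < v := hvall l hl
      rw [hx] at hmem
      linarith [hmem.2]
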